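/- Let p : ℝⁿ → ℝ be a continuously differentiable, everywhere positive probability density such that ∫ ‖∇log p(x)‖² p(x) dx < ∞, and let φ : ℝⁿ → ℝ be twice continuously differentiable such that ∇φ has compact support. Then (1/2) ∫ ‖∇log p(x) − ∇φ(x)‖² p(x) dx = (1/2) ∫ ‖∇log p(x)‖² p(x) dx + (1/2) ∫ [ ‖∇φ(x)‖² + 2 (Δφ)(x) ] p(x) dx. In particular, the Fisher divergence between p and the score ∇φ differs from half the score matching objective L_SM(φ) = ∫ [‖∇φ‖² + 2Δφ] p dx by a quantity not depending on φ. -/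

import Mathlib

open MeasureTheory
open scoped RealInnerProductSpace
open InnerProductSpace

/-- The divergence `div f = Σ_d ∂f_d/∂x_d` of a vector field on `ℝⁿ`. -/
noncomputable def diverg {n : ℕ}
    (f : EuclideanSpace ℝ (Fin n) → EuclideanSpace ℝ (Fin n))
    (x : EuclideanSpace ℝ (Fin n)) : ℝ :=
  ∑ d : Fin n, fderiv ℝ f x (EuclideanSpace.single d 1) d

/-- The Laplacian `Δφ = Σ_d ∂²φ/∂x_d²`, i.e. the divergence of the gradient. -/
noncomputable def laplacian {n : ℕ}
    (φ : EuclideanSpace ℝ (Fin n) → ℝ) (x : EuclideanSpace ℝ (Fin n)) : ℝ :=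
  diverg (fun y => gradient φ y) x

section AuxForFisher

variable {n : ℕ}

lemma grad_apply (f : EuclideanSpace ℝ (Fin n) → ℝ) (x v : EuclideanSpace ℝ (Fin n)) :
    ⟪gradient f x, v⟫ = fderiv ℝ f x v := toDual_symm_apply

lemma grad_coord (f : EuclideanSpace ℝ (Fin n) → ℝ) (x : EuclideanSpace ℝ (Fin n)) (d : Fin n) :
    gradient f x d = fderiv ℝ f x (EuclideanSpace.single d 1) := by
  rw [← grad_apply, EuclideanSpace.inner_single_right]
  simp

lemma grad_log (p : EuclideanSpace ℝ (Fin n) → ℝ) (hp : ContDiff ℝ 1 p)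
    (hppos : ∀ x, 0 < p x) (x : EuclideanSpace ℝ (Fin n)) :
    gradient (fun y => Real.log (p y)) x = (p x)⁻¹ • gradient p x := by
  have hd : HasFDerivAt p (fderiv ℝ p x) x := (hp.differentiable one_ne_zero x).hasFDerivAt
  have hl : HasDerivAt Real.log (p x)⁻¹ (p x) := Real.hasDerivAt_log (hppos x).ne'
  have h : HasFDerivAt (fun y => Real.log (p y)) ((p x)⁻¹ • fderiv ℝ p x) x :=
    hl.comp_hasFDerivAt x hd
  unfold gradient
  rw [h.fderiv, _root_.map_smul]

lemma ibp_core (p φ : EuclideanSpace ℝ (Fin n) → ℝ) (hp : ContDiff ℝ 1 p)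
    (hpint : Integrable p) (hφ : ContDiff ℝ 2 φ)
    (hφsupp : HasCompactSupport (fun y => gradient φ y)) :
    ∫ x, ⟪gradient p x, gradient φ x⟫ = - ∫ x, laplacian φ x * p x := by
  set e : Fin n → EuclideanSpace ℝ (Fin n) := fun d => EuclideanSpace.single d 1 with he
  set G : EuclideanSpace ℝ (Fin n) → EuclideanSpace ℝ (Fin n) := fun y => gradient φ y with hGdef
  have hGc : ContDiff ℝ 1 G := by
    have h1 : ContDiff ℝ 1 (fderiv ℝ φ) := hφ.fderiv_right (by norm_num)
    exact ((toDual ℝ (EuclideanSpace ℝ (Fin n))).symm.contDiff).comp h1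
  have hgd : ∀ d : Fin n, ContDiff ℝ 1 (fun y => G y d) := fun d => by
    simpa [Function.comp_def] using (EuclideanSpace.proj (𝕜 := ℝ) d).contDiff.comp hGc
  have hgdsupp : ∀ d : Fin n, HasCompactSupport (fun y => G y d) := fun d =>
    hφsupp.comp_left (g := fun v : EuclideanSpace ℝ (Fin n) => v d) rfl
  have contp' : ∀ d : Fin n, Continuous (fun x => fderiv ℝ p x (e d)) := fun d =>
    (ContinuousLinearMap.apply ℝ ℝ (e d)).continuous.comp (hp.continuous_fderiv one_ne_zero)
  have contgd : ∀ d : Fin n, Continuous (fun y => G y d) := fun d => ((hgd d).continuous)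
  have contgd' : ∀ d : Fin n, Continuous (fun x => fderiv ℝ (fun y => G y d) x (e d)) := fun d =>
    (ContinuousLinearMap.apply ℝ ℝ (e d)).continuous.comp ((hgd d).continuous_fderiv one_ne_zero)
  have hgd'supp : ∀ d : Fin n, HasCompactSupport (fun x => fderiv ℝ (fun y => G y d) x (e d)) :=
    fun d => (hgdsupp d).fderiv_apply ℝ (e d)
  have h1 : ∀ d : Fin n, Integrable (fun x => fderiv ℝ p x (e d) * G x d) := by
    intro d
    exact ((contp' d).mul (contgd d)).integrable_of_hasCompactSupport ((hgdsupp d).mul_left)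
  have h2 : ∀ d : Fin n, Integrable (fun x => p x * fderiv ℝ (fun y => G y d) x (e d)) := by
    intro d
    obtain ⟨C, hC⟩ := (contgd' d).bounded_above_of_compact_support (hgd'supp d)
    have := hpint.bdd_mul (contgd' d).aestronglyMeasurable (Filter.Eventually.of_forall hC)
    simpa [mul_comm] using this
  have h3 : ∀ d : Fin n, Integrable (fun x => p x * G x d) := by
    intro d
    obtain ⟨C, hC⟩ := (contgd d).bounded_above_of_compact_support (hgdsupp d)
    have := hpint.bdd_mul (contgd d).aestronglyMeasurable (Filter.Eventually.of_forall hC)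
    simpa [mul_comm] using this
  have key : ∀ d : Fin n,
      ∫ x, fderiv ℝ p x (e d) * G x d = - ∫ x, p x * fderiv ℝ (fun y => G y d) x (e d) := by
    intro d
    have h := integral_mul_fderiv_eq_neg_fderiv_mul_of_integrable (μ := volume)
      (f := p) (g := fun y => G y d) (v := e d) (h1 d) (h2 d) (h3 d)
      (fun x _ => hp.differentiable one_ne_zero x) (fun x _ => (hgd d).differentiable one_ne_zero x)
    linarith
  have hcoord : ∀ (d : Fin n) x, fderiv ℝ (fun y => G y d) x (e d) = fderiv ℝ G x (e d) d := by
    intro d x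
    have hGdiff : DifferentiableAt ℝ G x := (hGc.differentiable one_ne_zero).differentiableAt
    have h := ((EuclideanSpace.proj (𝕜 := ℝ) d).hasFDerivAt.comp x hGdiff.hasFDerivAt).fderiv
    calc fderiv ℝ (fun y => G y d) x (e d)
        = ((EuclideanSpace.proj (𝕜 := ℝ) d).comp (fderiv ℝ G x)) (e d) := by rw [← h]; rfl
      _ = fderiv ℝ G x (e d) d := rfl
  have hlap : ∀ x, laplacian φ x = ∑ d : Fin n, fderiv ℝ (fun y => G y d) x (e d) := by
    intro x
    simp only [laplacian, diverg, hcoord]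
    rfl
  have expand : ∀ x, ⟪gradient p x, G x⟫ = ∑ d : Fin n, fderiv ℝ p x (e d) * G x d := by
    intro x
    rw [PiLp.inner_apply]
    refine Finset.sum_congr rfl fun d _ => ?_
    simp [RCLike.inner_apply, grad_coord, he]
    ring
  calc ∫ x, ⟪gradient p x, gradient φ x⟫
      = ∫ x, ∑ d : Fin n, fderiv ℝ p x (e d) * G x d := by
        refine integral_congr_ae (Filter.Eventually.of_forall fun x => ?_)
        exact expand x
    _ = ∑ d : Fin n, ∫ x, fderiv ℝ p x (e d) * G x d := by
        exact integral_finset_sum _ fun d _ => h1 d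
    _ = ∑ d : Fin n, - ∫ x, p x * fderiv ℝ (fun y => G y d) x (e d) := by
        exact Finset.sum_congr rfl fun d _ => key d
    _ = - ∫ x, ∑ d : Fin n, p x * fderiv ℝ (fun y => G y d) x (e d) := by
        rw [integral_finset_sum _ fun d _ => h2 d, Finset.sum_neg_distrib]
    _ = - ∫ x, laplacian φ x * p x := by
        congr 1
        refine integral_congr_ae (Filter.Eventually.of_forall fun x => ?_)
        show ∑ d : Fin n, p x * fderiv ℝ (fun y => G y d) x (e d) = laplacian φ x * p x
        rw [hlap x, Finset.sum_mul]
        exact Finset.sum_congr rfl fun d _ => (mul_comm _ _)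


end AuxForFisher

/-- **Fisher divergence = ½·(score-matching objective) + constant.** For a continuously
differentiable, everywhere positive probability density `p` with
`∫ ‖∇log p‖² p dx < ∞`, and a twice continuously differentiable `φ` whose gradient has
compact support,
`(1/2)∫‖∇log p − ∇φ‖² p dx
  = (1/2)∫‖∇log p‖² p dx + (1/2)∫(‖∇φ‖² + 2Δφ) p dx`. -/
theorem fisher_divergence_eq_score_matching
    (n : ℕ)
    (p : EuclideanSpace ℝ (Fin n) → ℝ)
    (hp : ContDiff ℝ 1 p) (hppos : ∀ x, 0 < p x)
    (hpint : Integrable p) (hpone : ∫ x, p x = 1)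
    (hscore : Integrable (fun x => ‖gradient (fun y => Real.log (p y)) x‖ ^ 2 * p x))
    (φ : EuclideanSpace ℝ (Fin n) → ℝ)
    (hφ : ContDiff ℝ 2 φ)
    (hφsupp : HasCompactSupport (fun y => gradient φ y)) :
    (1 / 2) * ∫ x, ‖gradient (fun y => Real.log (p y)) x - gradient φ x‖ ^ 2 * p x
      = (1 / 2) * (∫ x, ‖gradient (fun y => Real.log (p y)) x‖ ^ 2 * p x)
        + (1 / 2) * ∫ x, (‖gradient φ x‖ ^ 2 + 2 * laplacian φ x) * p x := by
  have contp : Continuous p := hp.continuous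
  have contgradp : Continuous (fun x => gradient p x) :=
    ((toDual ℝ (EuclideanSpace ℝ (Fin n))).symm.continuous).comp (hp.continuous_fderiv one_ne_zero)
  have contG : Continuous (fun x => gradient φ x) := by
    have h1 : ContDiff ℝ 1 (fderiv ℝ φ) := hφ.fderiv_right (by norm_num)
    exact (((toDual ℝ (EuclideanSpace ℝ (Fin n))).symm.contDiff).comp h1).continuous
  -- pointwise expansion
  have hpt : ∀ x, ‖gradient (fun y => Real.log (p y)) x - gradient φ x‖ ^ 2 * p x
      = ‖gradient (fun y => Real.log (p y)) x‖ ^ 2 * p x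
        - 2 * ⟪gradient p x, gradient φ x⟫ + ‖gradient φ x‖ ^ 2 * p x := by
    intro x
    have hinner : ⟪gradient (fun y => Real.log (p y)) x, gradient φ x⟫ * p x
        = ⟪gradient p x, gradient φ x⟫ := by
      rw [grad_log p hp hppos x, real_inner_smul_left, mul_comm, ← mul_assoc,
        mul_inv_cancel₀ (hppos x).ne', one_mul]
    calc ‖gradient (fun y => Real.log (p y)) x - gradient φ x‖ ^ 2 * p x
        = (‖gradient (fun y => Real.log (p y)) x‖ ^ 2
            - 2 * ⟪gradient (fun y => Real.log (p y)) x, gradient φ x⟫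
            + ‖gradient φ x‖ ^ 2) * p x := by rw [norm_sub_sq_real]
      _ = ‖gradient (fun y => Real.log (p y)) x‖ ^ 2 * p x
            - 2 * (⟪gradient (fun y => Real.log (p y)) x, gradient φ x⟫ * p x)
            + ‖gradient φ x‖ ^ 2 * p x := by ring
      _ = _ := by rw [hinner]
  -- integrability
  have I2 : Integrable (fun x => ⟪gradient p x, gradient φ x⟫) := by
    have hc : Continuous fun x => ⟪gradient p x, gradient φ x⟫ := contgradp.inner contG
    have hs : HasCompactSupport fun x => ⟪gradient p x, gradient φ x⟫ := by
      apply hφsupp.mono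
      intro x hx
      simp only [Function.mem_support] at hx ⊢
      intro h0; exact hx (by rw [h0, inner_zero_right])
    exact hc.integrable_of_hasCompactSupport hs
  have I3 : Integrable (fun x => ‖gradient φ x‖ ^ 2 * p x) := by
    have hc : Continuous fun x => ‖gradient φ x‖ ^ 2 := (contG.norm.pow 2)
    have hs : HasCompactSupport fun x => ‖gradient φ x‖ ^ 2 := by
      apply hφsupp.mono
      intro x hx
      simp only [Function.mem_support] at hx ⊢
      intro h0; exact hx (by rw [h0]; simp)
    obtain ⟨C, hC⟩ := hc.bounded_above_of_compact_support hs
    exact hpint.bdd_mul hc.aestronglyMeasurable (Filter.Eventually.of_forall hC)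
  have contlap : Continuous (laplacian φ) := by
    have hG1 : ContDiff ℝ 1 (fun y => gradient φ y) := by
      have h1 : ContDiff ℝ 1 (fderiv ℝ φ) := hφ.fderiv_right (by norm_num)
      exact ((toDual ℝ (EuclideanSpace ℝ (Fin n))).symm.contDiff).comp h1
    have hfd : Continuous (fderiv ℝ (fun y => gradient φ y)) := hG1.continuous_fderiv one_ne_zero
    unfold laplacian diverg
    refine continuous_finset_sum _ fun d _ => ?_
    exact (EuclideanSpace.proj (𝕜 := ℝ) d).continuous.comp
      ((ContinuousLinearMap.apply ℝ (EuclideanSpace ℝ (Fin n))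
        (EuclideanSpace.single d 1)).continuous.comp hfd)
  have lapsupp : HasCompactSupport (laplacian φ) := by
    apply (hφsupp.fderiv ℝ).mono
    intro x hx
    simp only [Function.mem_support] at hx ⊢
    intro h0
    apply hx
    simp only [laplacian, diverg, h0]
    simp
  have I4 : Integrable (fun x => laplacian φ x * p x) :=
    (contlap.mul contp).integrable_of_hasCompactSupport lapsupp.mul_right
  have I1 : Integrable (fun x => ‖gradient (fun y => Real.log (p y)) x‖ ^ 2 * p x) := hscore
  -- split the left integral
  have hsplit : ∫ x, ‖gradient (fun y => Real.log (p y)) x - gradient φ x‖ ^ 2 * p x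
      = (∫ x, ‖gradient (fun y => Real.log (p y)) x‖ ^ 2 * p x)
        - 2 * (∫ x, ⟪gradient p x, gradient φ x⟫)
        + ∫ x, ‖gradient φ x‖ ^ 2 * p x := by
    have h12 : Integrable (fun x => ‖gradient (fun y => Real.log (p y)) x‖ ^ 2 * p x
        - 2 * ⟪gradient p x, gradient φ x⟫) := I1.sub (I2.const_mul 2)
    rw [integral_congr_ae (Filter.Eventually.of_forall hpt),
      integral_add h12 I3, integral_sub I1 (I2.const_mul 2), integral_const_mul]
  have hibp := ibp_core p φ hp hpint hφ hφsupp
  have hrhs : ∫ x, (‖gradient φ x‖ ^ 2 + 2 * laplacian φ x) * p x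
      = (∫ x, ‖gradient φ x‖ ^ 2 * p x) + 2 * ∫ x, laplacian φ x * p x := by
    have he : ∀ x, (‖gradient φ x‖ ^ 2 + 2 * laplacian φ x) * p x
        = ‖gradient φ x‖ ^ 2 * p x + 2 * (laplacian φ x * p x) := fun x => by ring
    rw [integral_congr_ae (Filter.Eventually.of_forall he),
      integral_add I3 (I4.const_mul 2), integral_const_mul]
  rw [hsplit, hrhs, hibp]
  ring
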